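/- arXiv:2405.17285 — 2 statements merged into one kernel-verified Lean document; each statement's English description precedes it below -/
import Mathlib

section
/- (Lemma 3.1, second part; quantitative form of Proposition 2.1(v).) Let u ∈ 𝒞(Ω) with A(u) > 0, B(u) > 0 and I_μ(u) < 0. Then A(u) ≥ (2·2*_μ/(2*_μ − 1)) · m_μ; equivalently, A(u) ≥ S_{H,L}^{(2N−μ)/(N−μ+2)}. In particular every element of the unstable set V_μ := {u ∈ 𝒞(Ω) : J_μ(u) < m_μ and I_μ(u) < 0} satisfies this lower bound on its Dirichlet energy. -/
open MeasureTheory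

noncomputable section

/-- The set of continuously differentiable functions with compact support contained in `Ω`. -/
def testFuns (N : ℕ) (Ω : Set (EuclideanSpace ℝ (Fin N))) :
    Set (EuclideanSpace ℝ (Fin N) → ℝ) :=
  {u | ContDiff ℝ 1 u ∧ HasCompactSupport u ∧ tsupport u ⊆ Ω}

/-- Dirichlet energy `A(u) = ∫ ‖∇u‖²`. -/
def Afun (N : ℕ) (u : EuclideanSpace ℝ (Fin N) → ℝ) : ℝ :=
  ∫ x, ‖fderiv ℝ u x‖ ^ 2

/-- Nonlocal Hartree-type energy `B(u)`. -/
def Bfun (N : ℕ) (μ : ℝ) (u : EuclideanSpace ℝ (Fin N) → ℝ) : ℝ :=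
  ∫ x, ∫ y, |u x| ^ ((2 * (N : ℝ) - μ) / ((N : ℝ) - 2)) *
    |u y| ^ ((2 * (N : ℝ) - μ) / ((N : ℝ) - 2)) * ‖x - y‖ ^ (-μ)

/-- The energy functional `J_μ`. -/
def Jfun (N : ℕ) (μ : ℝ) (u : EuclideanSpace ℝ (Fin N) → ℝ) : ℝ :=
  (1 / 2) * Afun N u - (1 / (2 * ((2 * (N : ℝ) - μ) / ((N : ℝ) - 2)))) * Bfun N μ u

/-- The Nehari functional `I_μ`. -/
def Ifun (N : ℕ) (μ : ℝ) (u : EuclideanSpace ℝ (Fin N) → ℝ) : ℝ :=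
  Afun N u - Bfun N μ u

/-- The best constant `S_{H,L}`. -/
def SHL (N : ℕ) (μ : ℝ) (Ω : Set (EuclideanSpace ℝ (Fin N))) : ℝ :=
  sInf {c : ℝ | ∃ u ∈ testFuns N Ω, 0 < Bfun N μ u ∧
    c = Afun N u / (Bfun N μ u) ^ (((N : ℝ) - 2) / (2 * (N : ℝ) - μ))}

/-- The critical level `m_μ`. -/
def mlevel (N : ℕ) (μ : ℝ) (Ω : Set (EuclideanSpace ℝ (Fin N))) : ℝ :=
  (((N : ℝ) - μ + 2) / (2 * (2 * (N : ℝ) - μ))) *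
    SHL N μ Ω ^ ((2 * (N : ℝ) - μ) / ((N : ℝ) - μ + 2))

end

/-- Lemma 3.1, second part: lower bound on the Dirichlet energy in the unstable set. -/
theorem unstable_set_dirichlet_lower_bound
    (N : ℕ) (hN : 3 ≤ N) (μ : ℝ) (hμ0 : 0 < μ) (hμN : μ < (N : ℝ))
    (Ω : Set (EuclideanSpace ℝ (Fin N))) (hΩo : IsOpen Ω) (hΩne : Ω.Nonempty)
    (u : EuclideanSpace ℝ (Fin N) → ℝ) (hu : u ∈ testFuns N Ω)
    (hA : 0 < Afun N u) (hB : 0 < Bfun N μ u) (hI : Ifun N μ u < 0) :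
    Afun N u ≥ (2 * ((2 * (N : ℝ) - μ) / ((N : ℝ) - 2)) /
        ((2 * (N : ℝ) - μ) / ((N : ℝ) - 2) - 1)) * mlevel N μ Ω ∧
    Afun N u ≥ SHL N μ Ω ^ ((2 * (N : ℝ) - μ) / ((N : ℝ) - μ + 2)) := by

  classical
  have hn : (3:ℝ) ≤ (N:ℝ) := by exact_mod_cast hN
  set n : ℝ := (N:ℝ) with hn_def
  have h2 : (0:ℝ) < n - 2 := by linarith
  have hd : (0:ℝ) < 2 * n - μ := by linarith
  have he : (0:ℝ) < n - μ + 2 := by linarith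
  set θ : ℝ := (n - 2) / (2 * n - μ) with hθ_def
  set q : ℝ := (2 * n - μ) / (n - μ + 2) with hq_def
  have hθ0 : 0 < θ := div_pos h2 hd
  have hθ1 : 1 - θ = (n - μ + 2) / (2 * n - μ) := by
    rw [hθ_def, one_sub_div hd.ne']
    ring
  have hθ1' : 0 < 1 - θ := by rw [hθ1]; exact div_pos he hd
  have hq0 : 0 < q := div_pos hd he
  have hq1 : (1 - θ) * q = 1 := by
    rw [hθ1, hq_def]
    field_simp
    exact div_self (by linarith)
  set S : ℝ := SHL N μ Ω with hS_def
  set T : Set ℝ := {c : ℝ | ∃ v ∈ testFuns N Ω, 0 < Bfun N μ v ∧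
    c = Afun N v / (Bfun N μ v) ^ (((N : ℝ) - 2) / (2 * (N : ℝ) - μ))} with hT_def
  have hmem : Afun N u / (Bfun N μ u) ^ θ ∈ T := ⟨u, hu, hB, rfl⟩
  have hTne : T.Nonempty := ⟨_, hmem⟩
  have hbdd : BddBelow T := by
    refine ⟨0, fun c hc => ?_⟩
    obtain ⟨v, hv, hBv, rfl⟩ := hc
    have hAv : 0 ≤ Afun N v := integral_nonneg fun x => by positivity
    positivity
  have hS0 : 0 ≤ S := by
    rw [hS_def, SHL]
    refine le_csInf hTne fun c hc => ?_
    obtain ⟨v, hv, hBv, rfl⟩ := hc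
    have hAv : 0 ≤ Afun N v := integral_nonneg fun x => by positivity
    positivity
  have hSle : S ≤ Afun N u / (Bfun N μ u) ^ θ := csInf_le hbdd hmem
  have hAB : Afun N u < Bfun N μ u := by
    have := hI
    rw [Ifun] at this
    linarith
  have hpow : (Afun N u) ^ θ ≤ (Bfun N μ u) ^ θ :=
    Real.rpow_le_rpow hA.le hAB.le hθ0.le
  have hApowpos : 0 < (Afun N u) ^ θ := Real.rpow_pos_of_pos hA θ
  have hS2 : S ≤ Afun N u ^ (1 - θ) := by
    calc S ≤ Afun N u / (Bfun N μ u) ^ θ := hSle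
    _ ≤ Afun N u / (Afun N u) ^ θ :=
        div_le_div_of_nonneg_left hA.le hApowpos hpow
    _ = Afun N u ^ (1 - θ) := by
        rw [Real.rpow_sub hA, Real.rpow_one]
  have key : S ^ q ≤ Afun N u := by
    calc S ^ q ≤ (Afun N u ^ (1 - θ)) ^ q := Real.rpow_le_rpow hS0 hS2 hq0.le
    _ = Afun N u ^ ((1 - θ) * q) := by rw [← Real.rpow_mul hA.le]
    _ = Afun N u := by rw [hq1, Real.rpow_one]
  constructor
  · have hcoef : (2 * ((2 * n - μ) / (n - 2)) / ((2 * n - μ) / (n - 2) - 1)) *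
        ((n - μ + 2) / (2 * (2 * n - μ))) = 1 := by
      have hne2 : n - 2 ≠ 0 := ne_of_gt h2
      have hned : 2 * n - μ ≠ 0 := ne_of_gt hd
      have hnee : n - μ + 2 ≠ 0 := ne_of_gt he
      have hp1 : (2 * n - μ) / (n - 2) - 1 = (n - μ + 2) / (n - 2) := by
        field_simp
        ring
      rw [hp1]
      field_simp
    rw [ge_iff_le, mlevel, ← mul_assoc]
    rw [show (2 * (N:ℝ) - μ) = 2 * n - μ from rfl, show ((N:ℝ) - μ + 2) = n - μ + 2 from rfl,
      show ((N:ℝ) - 2) = n - 2 from rfl]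
    rw [hcoef, one_mul]
    exact key
  · exact key
end

section
/- (Proposition 2.1(i), W_μ is a neighbourhood of 0: quantitative form.) Let u ∈ 𝒞(Ω) satisfy 0 < A(u) < ((N − μ + 2)/(2N − μ)) · S_{H,L}^{(2N−μ)/(N−μ+2)}. Then I_μ(u) > 0 and J_μ(u) < m_μ, i.e. u belongs to the stable set W_μ. -/
open MeasureTheory

lemma Afun_nonneg (N : ℕ) (v : EuclideanSpace ℝ (Fin N) → ℝ) : 0 ≤ Afun N v := by
  apply integral_nonneg; intro x; positivity

lemma Bfun_nonneg (N : ℕ) (μ : ℝ) (v : EuclideanSpace ℝ (Fin N) → ℝ) : 0 ≤ Bfun N μ v := by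
  apply integral_nonneg; intro x
  apply integral_nonneg; intro y
  positivity

/-- Proposition 2.1(i): `W_μ` is a neighbourhood of `0`, quantitative form. -/
theorem stable_set_neighbourhood
    (N : ℕ) (hN : 3 ≤ N) (μ : ℝ) (hμ0 : 0 < μ) (hμN : μ < (N : ℝ))
    (Ω : Set (EuclideanSpace ℝ (Fin N))) (hΩo : IsOpen Ω) (hΩne : Ω.Nonempty)
    (u : EuclideanSpace ℝ (Fin N) → ℝ) (hu : u ∈ testFuns N Ω)
    (hA0 : 0 < Afun N u)
    (hA : Afun N u < (((N : ℝ) - μ + 2) / (2 * (N : ℝ) - μ)) *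
      SHL N μ Ω ^ ((2 * (N : ℝ) - μ) / ((N : ℝ) - μ + 2))) :
    0 < Ifun N μ u ∧ Jfun N μ u < mlevel N μ Ω := by
  have hN3 : (3 : ℝ) ≤ (N : ℝ) := by exact_mod_cast hN
  set A : ℝ := Afun N u with hAdef
  set B : ℝ := Bfun N μ u with hBdef
  set S : ℝ := SHL N μ Ω with hSdef
  set t : ℝ := ((N : ℝ) - 2) / (2 * (N : ℝ) - μ) with htdef
  set p : ℝ := (2 * (N : ℝ) - μ) / ((N : ℝ) - 2) with hpdef
  set q : ℝ := (2 * (N : ℝ) - μ) / ((N : ℝ) - μ + 2) with hqdef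
  set c : ℝ := ((N : ℝ) - μ + 2) / (2 * (N : ℝ) - μ) with hcdef
  have hN2 : (0 : ℝ) < (N : ℝ) - 2 := by linarith
  have h2Nμ : (0 : ℝ) < 2 * (N : ℝ) - μ := by linarith
  have hNμ2 : (0 : ℝ) < (N : ℝ) - μ + 2 := by linarith
  have hppos : 0 < p := div_pos h2Nμ hN2
  have htpos : 0 < t := div_pos hN2 h2Nμ
  have hqpos : 0 < q := div_pos h2Nμ hNμ2
  have hcpos : 0 < c := div_pos hNμ2 h2Nμ
  have hp1 : 1 < p := by rw [hpdef, lt_div_iff₀ hN2]; linarith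
  have hc1 : c < 1 := by rw [hcdef, div_lt_one h2Nμ]; linarith
  have htp : t * p = 1 := by
    rw [htdef, hpdef]; field_simp; exact div_self (by linarith)
  have hqp : q * (p - 1) = p := by
    rw [hqdef, hpdef]; field_simp; ring
  have hBnn : 0 ≤ B := Bfun_nonneg N μ u
  -- S^q positive, hence S positive
  have hSqpos : 0 < S ^ q := by
    by_contra h
    push_neg at h
    have : c * S ^ q ≤ 0 := mul_nonpos_of_nonneg_of_nonpos hcpos.le h
    linarith
  have hS0 : 0 ≤ S := by
    apply Real.sInf_nonneg
    rintro x ⟨v, hv, hBv, rfl⟩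
    exact div_nonneg (Afun_nonneg N v) (Real.rpow_nonneg hBv.le _)
  have hSpos : 0 < S := by
    rcases hS0.lt_or_eq with h | h
    · exact h
    · exfalso
      rw [← h, Real.zero_rpow hqpos.ne'] at hSqpos
      exact lt_irrefl 0 hSqpos
  -- J part
  have hA2m : A < 2 * mlevel N μ Ω := by
    have : c * S ^ q = 2 * mlevel N μ Ω := by
      rw [mlevel, hcdef, hqdef, hSdef]
      have hne : 2 * (N:ℝ) - μ ≠ 0 := ne_of_gt h2Nμ
      field_simp
    linarith [hA.trans_eq this]
  have hJ : Jfun N μ u < mlevel N μ Ω := by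
    have hB2p : 0 ≤ (1 / (2 * p)) * B := by positivity
    have : Jfun N μ u = (1 / 2) * A - (1 / (2 * p)) * B := rfl
    rw [this]
    linarith
  refine ⟨?_, hJ⟩
  -- I part
  rcases hBnn.lt_or_eq with hBpos | hB0
  swap
  · show 0 < A - B
    linarith
  · show 0 < A - B
    have hbdd : BddBelow {c : ℝ | ∃ v ∈ testFuns N Ω, 0 < Bfun N μ v ∧
        c = Afun N v / (Bfun N μ v) ^ (((N : ℝ) - 2) / (2 * (N : ℝ) - μ))} := by
      refine ⟨0, ?_⟩
      rintro x ⟨v, hv, hBv, rfl⟩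
      exact div_nonneg (Afun_nonneg N v) (Real.rpow_nonneg hBv.le _)
    have hSle : S ≤ A / B ^ t :=
      csInf_le hbdd ⟨u, hu, hBpos, rfl⟩
    have hBtpos : 0 < B ^ t := Real.rpow_pos_of_pos hBpos t
    have hSB : S * B ^ t ≤ A := (le_div_iff₀ hBtpos).mp hSle
    have hBt : B ^ t ≤ A / S := by
      rw [le_div_iff₀ hSpos]; linarith [hSB]
    have hBle : B ≤ (A / S) ^ p := by
      have h1 : (B ^ t) ^ p ≤ (A / S) ^ p :=
        Real.rpow_le_rpow (Real.rpow_nonneg hBnn t) hBt hppos.le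
      rwa [← Real.rpow_mul hBnn, htp, Real.rpow_one] at h1
    -- A < S^q
    have hASq : A < S ^ q := by
      have : c * S ^ q < 1 * S ^ q := mul_lt_mul_of_pos_right hc1 hSqpos
      rw [one_mul] at this
      linarith
    have hAp1 : A ^ (p - 1) < S ^ p := by
      have h1 : A ^ (p - 1) < (S ^ q) ^ (p - 1) :=
        Real.rpow_lt_rpow hA0.le hASq (by linarith)
      rwa [← Real.rpow_mul hS0, hqp] at h1
    have hdiv : (A / S) ^ p = A ^ p / S ^ p := Real.div_rpow hA0.le hS0 p
    have hApeq : A ^ p = A ^ (p - 1) * A := by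
      rw [show p = p - 1 + 1 by ring, Real.rpow_add hA0, Real.rpow_one]
      ring_nf
    have hSppos : 0 < S ^ p := Real.rpow_pos_of_pos hSpos p
    have hlt : A ^ p / S ^ p < A := by
      rw [div_lt_iff₀ hSppos]
      nlinarith [hAp1, hA0, hApeq]
    linarith [hBle.trans_eq hdiv |>.trans_lt hlt]
end
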